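/- Let g > 0, w* ∈ (0,1), c ∈ ℝ, f : ℝ → ℝ differentiable at 0 with f(0) = 1, f(x) > 0 for all x, and f'(0) = c, and u : ℝ → ℝ differentiable at w* with u'(w*) = g. Define γ₁(w) = (w − 1)(u(w) − u(w*)), γ₂(w) = w(u(w) − u(w*)), and the normalized update map T(w) = w f(γ₁(w)) / (w f(γ₁(w)) + (1 − w) f(γ₂(w))). Then T(w*) = w*, T is differentiable at w*, and T'(w*) = 1 − c w*(1 − w*) g. -/

import Mathlib

/-- The normalized one-step update map
`T(w) = w f(γ₁(w)) / (w f(γ₁(w)) + (1 − w) f(γ₂(w)))`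
of the `K = 2` geometrical projection algorithm fixes the optimal weight `w*`
and is differentiable there with derivative `1 − c w*(1 − w*) g`. -/
theorem stmt6 (g wstar c : ℝ) (hg : 0 < g) (hw : wstar ∈ Set.Ioo (0 : ℝ) 1)
    (f : ℝ → ℝ) (hf0 : f 0 = 1) (hfpos : ∀ x, 0 < f x) (hf : HasDerivAt f c 0)
    (u : ℝ → ℝ) (hu : HasDerivAt u g wstar)
    (γ₁ γ₂ T : ℝ → ℝ)
    (hγ₁ : γ₁ = fun w => (w - 1) * (u w - u wstar))
    (hγ₂ : γ₂ = fun w => w * (u w - u wstar))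
    (hT : T = fun w => w * f (γ₁ w) / (w * f (γ₁ w) + (1 - w) * f (γ₂ w))) :
    T wstar = wstar ∧
    HasDerivAt T (1 - c * wstar * (1 - wstar) * g) wstar := by
  subst hγ₁ hγ₂ hT
  have h0 : (wstar - 1) * (u wstar - u wstar) = 0 := by ring
  have h0' : wstar * (u wstar - u wstar) = 0 := by ring
  -- derivative of γ₁
  have hγ1 : HasDerivAt (fun w => (w - 1) * (u w - u wstar)) ((wstar - 1) * g) wstar := by
    have h := ((hasDerivAt_id wstar).sub_const 1).mul (hu.sub_const (u wstar))
    refine h.congr_deriv ?_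
    simp only [id_eq]
    rw [sub_self]; ring
  have hγ2 : HasDerivAt (fun w => w * (u w - u wstar)) (wstar * g) wstar := by
    have h := (hasDerivAt_id wstar).mul (hu.sub_const (u wstar))
    refine h.congr_deriv ?_
    simp only [id_eq]
    rw [sub_self]; ring
  have hf1 : HasDerivAt f c ((wstar - 1) * (u wstar - u wstar)) := h0.symm ▸ hf
  have hf2 : HasDerivAt f c (wstar * (u wstar - u wstar)) := h0'.symm ▸ hf
  have hc1 : HasDerivAt (fun w => f ((w - 1) * (u w - u wstar))) (c * ((wstar - 1) * g)) wstar :=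
    hf1.comp wstar hγ1
  have hc2 : HasDerivAt (fun w => f (w * (u w - u wstar))) (c * (wstar * g)) wstar :=
    hf2.comp wstar hγ2
  have hA : HasDerivAt (fun w => w * f ((w - 1) * (u w - u wstar)))
      (1 + wstar * (c * ((wstar - 1) * g))) wstar := by
    have h := (hasDerivAt_id wstar).mul hc1
    refine h.congr_deriv ?_
    simp only [id_eq]
    rw [h0, hf0]; ring
  have hB : HasDerivAt (fun w => (1 - w) * f (w * (u w - u wstar)))
      (-1 + (1 - wstar) * (c * (wstar * g))) wstar := by
    have h := ((hasDerivAt_const wstar (1:ℝ)).sub (hasDerivAt_id wstar)).mul hc2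
    refine h.congr_deriv ?_
    simp only [id_eq, Pi.sub_apply]
    rw [h0', hf0]; ring
  have hD := hA.add hB
  have hDval : wstar * f ((wstar - 1) * (u wstar - u wstar)) +
      (1 - wstar) * f (wstar * (u wstar - u wstar)) = 1 := by
    rw [h0, h0', hf0]; ring
  have hne : wstar * f ((wstar - 1) * (u wstar - u wstar)) +
      (1 - wstar) * f (wstar * (u wstar - u wstar)) ≠ 0 := by rw [hDval]; norm_num
  have hT := hA.div hD hne
  constructor
  · simp only [h0, h0', hf0]
    field_simp
    ring
  · refine hT.congr_deriv ?_
    simp only [Pi.add_apply]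
    rw [h0, h0', hf0]
    ring
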